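/- arXiv:1309.5628 — 3 statements merged into one kernel-verified Lean document; each statement's English description precedes it below -/
import Mathlib

section
/- Let τᵢ (i = 1,…,n) and τ be triangle functions on Δ⁺ with τ ≤ τᵢ pointwise for each i, let γⁱ: Σ → Δ⁺ be τᵢ-decomposable submeasures on a ring Σ, and let α: (Δ⁺)ⁿ → Δ⁺ be an n-ary aggregation operator (nondecreasing in each coordinate with α(ε₀,…,ε₀) = ε₀) that dominates τ. Then γ(E) := α(γ¹(E), …, γⁿ(E)) is a τ-decomposable submeasure on Σ: γ(∅) = ε₀ and γ(E ∪ F) ≥ τ(γ(E), γ(F)) for all disjoint E, F ∈ Σ. -/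
open scoped ENNReal NNReal symmDiff

/-- Distance distribution function: nondecreasing, left-continuous,
`F 0 = 0`, `F ∞ = 1`, with values in `[0,1]`. -/
structure DDF where
  toFun : ℝ≥0∞ → ℝ
  mono : Monotone toFun
  left_cont : ∀ x, ContinuousWithinAt toFun (Set.Iio x) x
  map_zero : toFun 0 = 0
  map_top : toFun ⊤ = 1
  nonneg : ∀ x, 0 ≤ toFun x
  le_one : ∀ x, toFun x ≤ 1

/-- Pointwise order on `Δ⁺`. -/
instance : LE DDF := ⟨fun G H => ∀ x, G.toFun x ≤ H.toFun x⟩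

/-- `ε_a` for finite `a ≥ 0`. -/
noncomputable def epsD (a : ℝ≥0) : DDF where
  toFun := fun x => if (a : ℝ≥0∞) < x then 1 else 0
  mono := by
    intro x y hxy
    dsimp only
    split_ifs with h1 h2
    · exact le_refl _
    · exact absurd (lt_of_lt_of_le h1 hxy) h2
    · norm_num
    · exact le_refl _
  left_cont := by
    intro x
    by_cases hx : (a : ℝ≥0∞) < x
    · have h1 : (Set.Ioi (a : ℝ≥0∞)) ∈ nhdsWithin x (Set.Iio x) :=
        mem_nhdsWithin_of_mem_nhds (Ioi_mem_nhds hx)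
      have h2 : (fun _ : ℝ≥0∞ => (1 : ℝ)) =ᶠ[nhdsWithin x (Set.Iio x)]
          (fun y => if (a : ℝ≥0∞) < y then (1 : ℝ) else 0) := by
        filter_upwards [h1] with y hy
        exact (if_pos hy).symm
      have h3 : Filter.Tendsto (fun _ : ℝ≥0∞ => (1 : ℝ)) (nhdsWithin x (Set.Iio x))
          (nhds ((fun y => if (a : ℝ≥0∞) < y then (1 : ℝ) else 0) x)) := by
        simp only [if_pos hx]; exact tendsto_const_nhds
      exact Filter.Tendsto.congr' h2 h3
    · have h2 : (fun _ : ℝ≥0∞ => (0 : ℝ)) =ᶠ[nhdsWithin x (Set.Iio x)]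
          (fun y => if (a : ℝ≥0∞) < y then (1 : ℝ) else 0) := by
        filter_upwards [self_mem_nhdsWithin] with y hy
        have : ¬ (a : ℝ≥0∞) < y := fun h => hx (h.trans hy)
        exact (if_neg this).symm
      have h3 : Filter.Tendsto (fun _ : ℝ≥0∞ => (0 : ℝ)) (nhdsWithin x (Set.Iio x))
          (nhds ((fun y => if (a : ℝ≥0∞) < y then (1 : ℝ) else 0) x)) := by
        simp only [if_neg hx]; exact tendsto_const_nhds
      exact Filter.Tendsto.congr' h2 h3
  map_zero := by simp
  map_top := by simp [ENNReal.coe_lt_top]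
  nonneg := by intro x; (try dsimp only); split_ifs <;> norm_num
  le_one := by intro x; (try dsimp only); split_ifs <;> norm_num

/-- `ε₀`, the identity of triangle functions. -/
noncomputable def eps0 : DDF := epsD 0

/-- A triangle function on `Δ⁺`: commutative, associative, nondecreasing in
each argument, with `ε₀` as identity. -/
structure TriangleFn where
  op : DDF → DDF → DDF
  comm : ∀ G H, op G H = op H G
  assoc : ∀ G H K, op (op G H) K = op G (op H K)
  mono_left : ∀ ⦃G G'⦄ (H : DDF), G ≤ G' → op G H ≤ op G' H
  mono_right : ∀ (G : DDF) ⦃H H'⦄, H ≤ H' → op G H ≤ op G H'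
  eps0_op : ∀ G, op eps0 G = G


/-- Aggregation of `τᵢ`-decomposable submeasures by an `n`-ary aggregation operator
dominating a common lower bound `τ` of the `τᵢ` is a `τ`-decomposable submeasure. -/
theorem stmt5 {Ω : Type*} [Nonempty Ω] (𝒮 : Set (Set Ω))
    (h𝒮 : MeasureTheory.IsSetRing 𝒮) (n : ℕ) (τ : TriangleFn) (τs : Fin n → TriangleFn)
    (hle : ∀ i : Fin n, ∀ G H : DDF, (τ.op G H) ≤ (τs i).op G H)
    (α : (Fin n → DDF) → DDF)
    (hαmono : ∀ G H : Fin n → DDF, (∀ i, G i ≤ H i) → α G ≤ α H)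
    (hαeps : α (fun _ => eps0) = eps0)
    (hdom : ∀ G H : Fin n → DDF,
      τ.op (α G) (α H) ≤ α (fun i => τ.op (G i) (H i)))
    (γs : Fin n → Set Ω → DDF)
    (hempty : ∀ i, γs i ∅ = eps0)
    (hsub : ∀ i, ∀ E F : Set Ω, E ∈ 𝒮 → F ∈ 𝒮 → Disjoint E F →
      (τs i).op (γs i E) (γs i F) ≤ γs i (E ∪ F)) :
    α (fun i => γs i ∅) = eps0 ∧
      ∀ E F : Set Ω, E ∈ 𝒮 → F ∈ 𝒮 → Disjoint E F →
        τ.op (α fun i => γs i E) (α fun i => γs i F) ≤ α (fun i => γs i (E ∪ F)) := by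
  constructor
  · simp only [hempty]; exact hαeps
  · intro E F hE hF hEF
    intro x
    refine le_trans (hdom (fun i => γs i E) (fun i => γs i F) x) ?_
    exact hαmono _ _ (fun i y => le_trans (hle i _ _ y) (hsub i E F hE hF hEF y)) x
end

section
/- With Γ the set of probabilistic pseudo-metrics with respect to a triangle function τ on Σ, the order ρ ⪯ ϱ defined by ρ(E,F) ≥ ϱ(E,F) for all E, F, and the operation ⊕_ϑ (ρ ⊕_ϑ ϱ)(E,F) := ϑ(ρ(E,F), ϱ(E,F)) for a triangle function ϑ dominating τ: the triple (Γ, ⊕_ϑ, ⪯) is a partially ordered commutative semigroup with neutral element ν, where ν(E,F) = ε₀ for all E, F. In particular ⊕_ϑ is commutative, associative, has ν as identity, and is compatible with ⪯: ρ ⪯ ϱ implies ρ ⊕_ϑ σ ⪯ ϱ ⊕_ϑ σ. -/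
open scoped ENNReal NNReal symmDiff

/-- A probabilistic pseudo-metric with respect to the triangle function `τ`. -/
def IsPPM {X : Type*} (τ : TriangleFn) (ρ : X → X → DDF) : Prop :=
  (∀ E, ρ E E = eps0) ∧ (∀ E F, ρ E F = ρ F E) ∧
    (∀ E F G, τ.op (ρ E F) (ρ F G) ≤ ρ E G)

lemma DDF.le_refl' (G : DDF) : G ≤ G := fun x => le_refl _

lemma DDF.le_trans' {G H K : DDF} (h1 : G ≤ H) (h2 : H ≤ K) : G ≤ K :=
  fun x => le_trans (h1 x) (h2 x)

/-- `(Γ_τ, ⊕_ϑ, ⪯)` is a partially ordered commutative semigroup with neutral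
element `ν ≡ ε₀`. -/
theorem stmt10 {X : Type*} [Nonempty X] (τ ϑ : TriangleFn)
    (hdom : ∀ a b c d : DDF, τ.op (ϑ.op a c) (ϑ.op b d) ≤ ϑ.op (τ.op a b) (τ.op c d)) :
    let oplus : (X → X → DDF) → (X → X → DDF) → (X → X → DDF) :=
      fun ρ σ E F => ϑ.op (ρ E F) (σ E F)
    let nu : X → X → DDF := fun _ _ => eps0
    let prec : (X → X → DDF) → (X → X → DDF) → Prop :=
      fun ρ σ => ∀ E F, σ E F ≤ ρ E F
    IsPPM τ nu ∧
      (∀ ρ σ, IsPPM τ ρ → IsPPM τ σ → IsPPM τ (oplus ρ σ)) ∧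
      (∀ ρ σ, oplus ρ σ = oplus σ ρ) ∧
      (∀ ρ σ π, oplus (oplus ρ σ) π = oplus ρ (oplus σ π)) ∧
      (∀ ρ, oplus nu ρ = ρ) ∧
      (∀ ρ σ π, IsPPM τ ρ → IsPPM τ σ → IsPPM τ π →
        prec ρ σ → prec (oplus ρ π) (oplus σ π)) := by
  intro oplus nu prec
  refine ⟨⟨fun E => rfl, fun E F => rfl, fun E F G => ?_⟩, ?_, ?_, ?_, ?_, ?_⟩
  · rw [τ.eps0_op]; exact DDF.le_refl' _
  · rintro ρ σ ⟨hρ1, hρ2, hρ3⟩ ⟨hσ1, hσ2, hσ3⟩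
    refine ⟨fun E => ?_, fun E F => ?_, fun E F G => ?_⟩
    · show ϑ.op (ρ E E) (σ E E) = eps0
      rw [hρ1, hσ1, ϑ.eps0_op]
    · show ϑ.op (ρ E F) (σ E F) = ϑ.op (ρ F E) (σ F E)
      rw [hρ2, hσ2]
    · refine DDF.le_trans' (hdom (ρ E F) (ρ F G) (σ E F) (σ F G)) ?_
      exact DDF.le_trans' (ϑ.mono_left _ (hρ3 E F G)) (ϑ.mono_right _ (hσ3 E F G))
  · intro ρ σ; funext E F; exact ϑ.comm _ _
  · intro ρ σ π; funext E F; exact ϑ.assoc _ _ _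
  · intro ρ; funext E F; exact ϑ.eps0_op _
  · intro ρ σ π _ _ _ h E F
    exact ϑ.mono_left _ (h E F)
end

section
/- Let τ be a triangle function, Σ = P(Ω), and Λ: Σ → Δ⁺ any set function with Λ(∅) = ε₀ and Λ(Ω) such that Λ(Ω) satisfies the measurability equations below. Call E ∈ Σ Λ-measurable w.r.t. τ if Λ(G) = τ(Λ(G ∩ E), Λ(G ∩ Eᶜ)) for every G ∈ Σ. Then the collection S_τ of all Λ-measurable sets w.r.t. τ is an algebra of sets: it contains ∅ and Ω, is closed under complementation, and is closed under finite unions. -/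
open scoped ENNReal NNReal symmDiff

/-- The collection of `Λ`-measurable sets w.r.t. a triangle function `τ`
is an algebra of sets. -/
theorem stmt17 {Ω : Type*} [Nonempty Ω] (τ : TriangleFn) (Λ : Set Ω → DDF)
    (hempty : Λ ∅ = eps0) :
    let Meas : Set Ω → Prop :=
      fun E => ∀ G : Set Ω, Λ G = τ.op (Λ (G ∩ E)) (Λ (G ∩ Eᶜ))
    Meas ∅ ∧ Meas Set.univ ∧ (∀ E, Meas E → Meas Eᶜ) ∧
      (∀ E F, Meas E → Meas F → Meas (E ∪ F)) := by
  intro Meas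
  have hmem : Meas ∅ := by
    intro G
    simp only [Set.inter_empty, hempty, Set.compl_empty, Set.inter_univ, τ.eps0_op]
  have huniv : Meas Set.univ := by
    intro G
    rw [τ.comm]
    simp only [Set.compl_univ, Set.inter_empty, hempty, Set.inter_univ, τ.eps0_op]
  refine ⟨hmem, huniv, ?_, ?_⟩
  · intro E hE G
    rw [τ.comm, compl_compl]
    exact hE G
  · intro E F hE hF G
    have h1 : G ∩ (E ∪ F) ∩ E = G ∩ E := by ext x; simp; tauto
    have h2 : G ∩ (E ∪ F) ∩ Eᶜ = G ∩ Eᶜ ∩ F := by ext x; simp; tauto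
    have h3 : G ∩ Eᶜ ∩ Fᶜ = G ∩ (E ∪ F)ᶜ := by ext x; simp; tauto
    calc Λ G = τ.op (Λ (G ∩ E)) (Λ (G ∩ Eᶜ)) := hE G
      _ = τ.op (Λ (G ∩ E)) (τ.op (Λ (G ∩ Eᶜ ∩ F)) (Λ (G ∩ Eᶜ ∩ Fᶜ))) := by rw [← hF (G ∩ Eᶜ)]
      _ = τ.op (τ.op (Λ (G ∩ E)) (Λ (G ∩ Eᶜ ∩ F))) (Λ (G ∩ Eᶜ ∩ Fᶜ)) := (τ.assoc _ _ _).symm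
      _ = τ.op (Λ (G ∩ (E ∪ F))) (Λ (G ∩ (E ∪ F)ᶜ)) := by
          rw [h3, hE (G ∩ (E ∪ F)), h1, h2]
end
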